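/- arXiv:2506.16290 — 4 statements merged into one kernel-verified Lean document; each statement's English description precedes it below -/
import Mathlib

section
/- Bernstein relation for elliptic Demazure–Lusztig operators: for every simple root α and every a ∈ Q, one has T_α^λ · a = ^{s_α}(^{s_α^dyn} a) · T_α^λ + [θ(ℏ)θ(z_α−λ_{α∨})/(θ(z_α)θ(ℏ−λ_{α∨}))] · ^{s_α^dyn}(a − ^{s_α}a) · δ_α^dyn in Q_{W^dyn×W}. -/
/-! Statements from "Poincaré duality of elliptic classes of Schubert varieties"
(Kostant–Kumar method), formalized over an abstract twisted group algebra. -/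

open scoped BigOperators
open scoped Classical

/-- The product of a word in the simple reflections. -/
def wordProd {n : ℕ} {W : Type*} [Group W] (s : Fin n → W) (l : List (Fin n)) : W :=
  (l.map s).prod

/-- `l` is a reduced word for `w` (a product expression of minimal length). -/
def IsReducedWordFor {n : ℕ} {W : Type*} [Group W] (s : Fin n → W) (w : W)
    (l : List (Fin n)) : Prop :=
  wordProd s l = w ∧ ∀ l' : List (Fin n), wordProd s l' = w → l.length ≤ l'.length

/-- The Bruhat order on the Weyl group, defined via the subword property. -/
def BruhatLE {n : ℕ} {W : Type*} [Group W] (s : Fin n → W) (v w : W) : Prop :=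
  ∃ lw : List (Fin n), IsReducedWordFor s w lw ∧
    ∃ lv : List (Fin n), lv.Sublist lw ∧ wordProd s lv = v

/-- Bernstein relation for the elliptic Demazure–Lusztig operators:
for every simple root `α = αr i` and every `a ∈ Q`,
`T_α^λ · a = ^{s_α}(^{s_α^dyn} a) · T_α^λ
  + [θ(ℏ)θ(z_α−λ_{α∨})/(θ(z_α)θ(ℏ−λ_{α∨}))] · ^{s_α^dyn}(a − ^{s_α}a) · δ_α^dyn`. -/
theorem bernstein_relation
    -- the Weyl group `W`, generated by the simple reflections `s i`
    {n : ℕ} {W : Type*} [Group W] [Fintype W] [DecidableEq W]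
    (s : Fin n → W) (hgen : Subgroup.closure (Set.range s) = ⊤)
    (hs2 : ∀ i : Fin n, s i * s i = 1)
    -- the root lattice `L = ℤΦ` and coroot lattice `Lc = ℤΦ∨` with their `W`-actions,
    -- the roots `Φ`, positive roots `Φpos`, simple roots `αr i`, and the coroot map `cor`
    {L Lc : Type*} [AddCommGroup L] [AddCommGroup Lc] [DecidableEq L]
    (ρ : W →* Multiplicative (AddAut L)) (ρc : W →* Multiplicative (AddAut Lc))
    (Φ Φpos : Finset L)
    (hΦ : (Φ : Set L) = (Φpos : Set L) ∪ (-(Φpos : Set L)))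
    (αr : Fin n → L) (hαr : ∀ i, αr i ∈ Φpos)
    (cor : L → Lc)
    (hραr : ∀ i, ρ (s i) (αr i) = -(αr i))
    (hperm : ∀ i : Fin n, ∀ β ∈ Φpos, β ≠ αr i → ρ (s i) β ∈ Φpos)
    (hΦinv : ∀ w : W, ∀ β ∈ Φ, ρ w β ∈ Φ)
    (hcorW : ∀ w : W, ∀ β ∈ Φ, cor (ρ w β) = ρc w (cor β))
    (hcorneg : ∀ β ∈ Φ, cor (-β) = -(cor β))
    -- the field `Q` with two commuting `W`-actions: the ordinary action `σ`
    -- and the dynamical action `σd`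
    {Q : Type*} [Field Q]
    (σ σd : W →* (Q ≃+* Q))
    (hσcomm : ∀ (w v : W) (a : Q), σ w (σd v a) = σd v (σ w a))
    -- the theta data: `A μ = θ(z_μ)`, `Ah μ = θ(ℏ-z_μ)`, `B ν = θ(λ_ν)`, `Bh ν = θ(ℏ-λ_ν)`,
    -- `C μ ν = θ(z_μ+λ_ν)`, `c = θ(ℏ)`
    (A Ah : L → Q) (B Bh : Lc → Q) (C : L → Lc → Q) (c : Q)
    (hA : ∀ (w : W) (μ : L), σ w (A μ) = A (ρ w μ))
    (hAh : ∀ (w : W) (μ : L), σ w (Ah μ) = Ah (ρ w μ))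
    (hB : ∀ (w : W) (ν : Lc), σ w (B ν) = B ν)
    (hBh : ∀ (w : W) (ν : Lc), σ w (Bh ν) = Bh ν)
    (hC : ∀ (w : W) (μ : L) (ν : Lc), σ w (C μ ν) = C (ρ w μ) ν)
    (hdA : ∀ (w : W) (μ : L), σd w (A μ) = A μ)
    (hdAh : ∀ (w : W) (μ : L), σd w (Ah μ) = Ah μ)
    (hdB : ∀ (w : W) (ν : Lc), σd w (B ν) = B (ρc w ν))
    (hdBh : ∀ (w : W) (ν : Lc), σd w (Bh ν) = Bh (ρc w ν))
    (hdC : ∀ (w : W) (μ : L) (ν : Lc), σd w (C μ ν) = C μ (ρc w ν))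
    (hcσ : ∀ w : W, σ w c = c) (hcσd : ∀ w : W, σd w c = c)
    (hAneg : ∀ μ : L, A (-μ) = -(A μ)) (hBneg : ∀ ν : Lc, B (-ν) = -(B ν))
    (hA0 : ∀ β ∈ Φ, A β ≠ 0) (hAh0 : ∀ β ∈ Φ, Ah β ≠ 0) (hAh0n : ∀ β ∈ Φ, Ah (-β) ≠ 0)
    (hB0 : ∀ β ∈ Φ, B (cor β) ≠ 0) (hBh0 : ∀ β ∈ Φ, Bh (cor β) ≠ 0)
    (hBh0n : ∀ β ∈ Φ, Bh (-(cor β)) ≠ 0)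
    -- the twisted group algebra `R = Q_{W^dyn×W}`, free left `Q`-module with basis
    -- `{δd w * δ v}` and twisted product; `φ : Q → R` is the inclusion
    {R : Type*} [Ring R]
    (φ : Q →+* R) (δd δ : W →* R)
    (hδcomm : ∀ w v : W, δ v * δd w = δd w * δ v)
    (hδφ : ∀ (v : W) (a : Q), δ v * φ a = φ (σ v a) * δ v)
    (hδdφ : ∀ (w : W) (a : Q), δd w * φ a = φ (σd w a) * δd w)
    (hspan : ∀ x : R, ∃ cf : W × W → Q, x = ∑ p : W × W, φ (cf p) * δd p.1 * δ p.2)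
    (hfree : ∀ cf : W × W → Q,
      (∑ p : W × W, φ (cf p) * δd p.1 * δ p.2) = 0 → ∀ p : W × W, cf p = 0)
    (i : Fin n) (a : Q) (Ti : R)
    (hTi : Ti =
      φ (Ah (αr i) * B (cor (αr i)) / (A (αr i) * Bh (cor (αr i)))) * (δ (s i) * δd (s i)) +
        φ (c * C (αr i) (-(cor (αr i))) / (A (αr i) * Bh (cor (αr i)))) * δd (s i)) :
    Ti * φ a =
      φ (σ (s i) (σd (s i) a)) * Ti +
        φ (c * C (αr i) (-(cor (αr i))) / (A (αr i) * Bh (cor (αr i))) *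
            σd (s i) (a - σ (s i) a)) * δd (s i) := by
  have key1 : (δ (s i) * δd (s i)) * φ a
      = φ (σ (s i) (σd (s i) a)) * (δ (s i) * δd (s i)) := by
    rw [mul_assoc, hδdφ, ← mul_assoc, hδφ, mul_assoc]
  have key2 := hδdφ (s i) a
  set b1 := Ah (αr i) * B (cor (αr i)) / (A (αr i) * Bh (cor (αr i))) with hb1
  set b2 := c * C (αr i) (-(cor (αr i))) / (A (αr i) * Bh (cor (αr i))) with hb2
  have hQ : b2 * σd (s i) a
      = σ (s i) (σd (s i) a) * b2 + b2 * σd (s i) (a - σ (s i) a) := by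
    rw [map_sub, ← hσcomm]; ring
  rw [hTi, add_mul, mul_assoc (φ b1), mul_assoc (φ b2), key1, key2,
    ← mul_assoc (φ b1), ← mul_assoc (φ b2), ← map_mul, ← map_mul, hQ, map_add, add_mul,
    mul_comm b1 (σ (s i) (σd (s i) a)), map_mul, map_mul, map_mul,
    mul_assoc, mul_assoc, mul_assoc, mul_add, add_assoc]
end

section
/- The transition matrices are inverse to each other in the following twisted sense: for all w, u ∈ W, Σ_{v∈W} a^λ_{w,v} · ^{w^dyn}(b^λ_{v,u}) = δ^{Kr}_{w,u} and Σ_{v∈W} b^λ_{w,v} · ^{(v⁻¹)^dyn}(a^λ_{v,u}) = δ^{Kr}_{w,u}, where δ^{Kr} is the Kronecker delta. -/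
/-! Statements from "Poincaré duality of elliptic classes of Schubert varieties"
(Kostant–Kumar method), formalized over an abstract twisted group algebra. -/

open scoped BigOperators
open scoped Classical

/-- the transition matrices `a^λ` and `b^λ` are inverse in the twisted sense:
`Σ_v a^λ_{w,v} · ^{w^dyn}(b^λ_{v,u}) = δ^{Kr}_{w,u}` and
`Σ_v b^λ_{w,v} · ^{(v⁻¹)^dyn}(a^λ_{v,u}) = δ^{Kr}_{w,u}`. -/
theorem transition_matrices_inverse
    -- the Weyl group `W`, generated by the simple reflections `s i`
    {n : ℕ} {W : Type*} [Group W] [Fintype W] [DecidableEq W]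
    (s : Fin n → W) (hgen : Subgroup.closure (Set.range s) = ⊤)
    (hs2 : ∀ i : Fin n, s i * s i = 1)
    -- the root lattice `L = ℤΦ` and coroot lattice `Lc = ℤΦ∨` with their `W`-actions,
    -- the roots `Φ`, positive roots `Φpos`, simple roots `αr i`, and the coroot map `cor`
    {L Lc : Type*} [AddCommGroup L] [AddCommGroup Lc] [DecidableEq L]
    (ρ : W →* Multiplicative (AddAut L)) (ρc : W →* Multiplicative (AddAut Lc))
    (Φ Φpos : Finset L)
    (hΦ : (Φ : Set L) = (Φpos : Set L) ∪ (-(Φpos : Set L)))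
    (αr : Fin n → L) (hαr : ∀ i, αr i ∈ Φpos)
    (cor : L → Lc)
    (hραr : ∀ i, ρ (s i) (αr i) = -(αr i))
    (hperm : ∀ i : Fin n, ∀ β ∈ Φpos, β ≠ αr i → ρ (s i) β ∈ Φpos)
    (hΦinv : ∀ w : W, ∀ β ∈ Φ, ρ w β ∈ Φ)
    (hcorW : ∀ w : W, ∀ β ∈ Φ, cor (ρ w β) = ρc w (cor β))
    (hcorneg : ∀ β ∈ Φ, cor (-β) = -(cor β))
    -- the field `Q` with two commuting `W`-actions: the ordinary action `σ`
    -- and the dynamical action `σd`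
    {Q : Type*} [Field Q]
    (σ σd : W →* (Q ≃+* Q))
    (hσcomm : ∀ (w v : W) (a : Q), σ w (σd v a) = σd v (σ w a))
    -- the theta data: `A μ = θ(z_μ)`, `Ah μ = θ(ℏ-z_μ)`, `B ν = θ(λ_ν)`, `Bh ν = θ(ℏ-λ_ν)`,
    -- `C μ ν = θ(z_μ+λ_ν)`, `c = θ(ℏ)`
    (A Ah : L → Q) (B Bh : Lc → Q) (C : L → Lc → Q) (c : Q)
    (hA : ∀ (w : W) (μ : L), σ w (A μ) = A (ρ w μ))
    (hAh : ∀ (w : W) (μ : L), σ w (Ah μ) = Ah (ρ w μ))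
    (hB : ∀ (w : W) (ν : Lc), σ w (B ν) = B ν)
    (hBh : ∀ (w : W) (ν : Lc), σ w (Bh ν) = Bh ν)
    (hC : ∀ (w : W) (μ : L) (ν : Lc), σ w (C μ ν) = C (ρ w μ) ν)
    (hdA : ∀ (w : W) (μ : L), σd w (A μ) = A μ)
    (hdAh : ∀ (w : W) (μ : L), σd w (Ah μ) = Ah μ)
    (hdB : ∀ (w : W) (ν : Lc), σd w (B ν) = B (ρc w ν))
    (hdBh : ∀ (w : W) (ν : Lc), σd w (Bh ν) = Bh (ρc w ν))
    (hdC : ∀ (w : W) (μ : L) (ν : Lc), σd w (C μ ν) = C μ (ρc w ν))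
    (hcσ : ∀ w : W, σ w c = c) (hcσd : ∀ w : W, σd w c = c)
    (hAneg : ∀ μ : L, A (-μ) = -(A μ)) (hBneg : ∀ ν : Lc, B (-ν) = -(B ν))
    (hA0 : ∀ β ∈ Φ, A β ≠ 0) (hAh0 : ∀ β ∈ Φ, Ah β ≠ 0) (hAh0n : ∀ β ∈ Φ, Ah (-β) ≠ 0)
    (hB0 : ∀ β ∈ Φ, B (cor β) ≠ 0) (hBh0 : ∀ β ∈ Φ, Bh (cor β) ≠ 0)
    (hBh0n : ∀ β ∈ Φ, Bh (-(cor β)) ≠ 0)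
    -- the twisted group algebra `R = Q_{W^dyn×W}`, free left `Q`-module with basis
    -- `{δd w * δ v}` and twisted product; `φ : Q → R` is the inclusion
    {R : Type*} [Ring R]
    (φ : Q →+* R) (δd δ : W →* R)
    (hδcomm : ∀ w v : W, δ v * δd w = δd w * δ v)
    (hδφ : ∀ (v : W) (a : Q), δ v * φ a = φ (σ v a) * δ v)
    (hδdφ : ∀ (w : W) (a : Q), δd w * φ a = φ (σd w a) * δd w)
    (hspan : ∀ x : R, ∃ cf : W × W → Q, x = ∑ p : W × W, φ (cf p) * δd p.1 * δ p.2)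
    (hfree : ∀ cf : W × W → Q,
      (∑ p : W × W, φ (cf p) * δd p.1 * δ p.2) = 0 → ∀ p : W × W, cf p = 0)
    -- the elliptic Demazure–Lusztig operators `Tl w = T_w^λ`, `Tml w = T_w^{-λ}`
    -- (the braid relations and `(T_i)² = 1` amount to `T_u T_v = T_(uv)` for all `u,v`)
    (Tl Tml : W → R)
    (hTl1 : Tl 1 = 1) (hTml1 : Tml 1 = 1)
    (hTlmul : ∀ u v : W, Tl u * Tl v = Tl (u * v))
    (hTmlmul : ∀ u v : W, Tml u * Tml v = Tml (u * v))
    (hTls : ∀ i : Fin n, Tl (s i) =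
      φ (Ah (αr i) * B (cor (αr i)) / (A (αr i) * Bh (cor (αr i)))) * (δ (s i) * δd (s i)) +
        φ (c * C (αr i) (-(cor (αr i))) / (A (αr i) * Bh (cor (αr i)))) * δd (s i))
    (hTmls : ∀ i : Fin n, Tml (s i) =
      -(φ (Ah (αr i) * B (cor (αr i)) / (A (αr i) * Bh (-(cor (αr i))))) * (δ (s i) * δd (s i))) +
        φ (c * C (αr i) (cor (αr i)) / (A (αr i) * Bh (-(cor (αr i))))) * δd (s i))
    -- the coefficients `a^λ_{w,v}` of `T_w^λ` in the basis `{δd w * δ v}`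
    (aL : W → W → Q)
    (haL : ∀ w : W, Tl w = ∑ v : W, φ (aL w v) * δd w * δ v)
    (haL0 : ∀ w v : W, ¬ BruhatLE s v w → aL w v = 0)
    -- the coefficients `b^λ_{w,v}` of `δ_w` in the basis `{δd v⁻¹ * T_v^λ}`
    (bL : W → W → Q)
    (hbL : ∀ w : W, δ w = ∑ v : W, φ (bL w v) * δd v⁻¹ * Tl v)
    (hbL0 : ∀ w v : W, ¬ BruhatLE s v w → bL w v = 0)
    (w u : W) :
    (∑ v : W, aL w v * σd w (bL v u)) = (if w = u then 1 else 0) ∧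
    (∑ v : W, bL w v * σd v⁻¹ (aL v u)) = (if w = u then 1 else 0) := by

  -- Key identity (the second one), derived from expanding `δ w` in two ways and
  -- using freeness of the basis `{δd p.1 * δ p.2}`.
  have hinv : ∀ x : W, ∀ a : Q, σd x (σd x⁻¹ a) = a := by
    intro x a
    have h : σd x * σd x⁻¹ = 1 := by rw [← map_mul, mul_inv_cancel, map_one]
    have h2 : (σd x * σd x⁻¹) a = (1 : Q ≃+* Q) a := by rw [h]
    exact h2
  have key2 : ∀ w u : W, (∑ v : W, bL w v * σd v⁻¹ (aL v u)) = (if u = w then 1 else 0) := by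
    intro w u
    have hterm : ∀ (b a : Q) (v x : W),
        φ b * δd v⁻¹ * (φ a * δd v * δ x) = φ (b * σd v⁻¹ a) * δ x := by
      intro b a v x
      have h1 : δd v⁻¹ * φ a = φ (σd v⁻¹ a) * δd v⁻¹ := hδdφ v⁻¹ a
      have h2 : δd v⁻¹ * δd v = 1 := by rw [← map_mul, inv_mul_cancel, map_one]
      calc φ b * δd v⁻¹ * (φ a * δd v * δ x)
          = φ b * ((δd v⁻¹ * φ a) * δd v * δ x) := by
            simp only [mul_assoc]
        _ = φ b * ((φ (σd v⁻¹ a) * δd v⁻¹) * δd v * δ x) := by rw [h1]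
        _ = φ b * (φ (σd v⁻¹ a) * ((δd v⁻¹ * δd v) * δ x)) := by
            simp only [mul_assoc]
        _ = φ (b * σd v⁻¹ a) * δ x := by rw [h2, one_mul, ← mul_assoc, ← map_mul]
    have expand : δ w = ∑ x : W, φ (∑ v : W, bL w v * σd v⁻¹ (aL v x)) * δ x := by
      calc δ w = ∑ v : W, φ (bL w v) * δd v⁻¹ * Tl v := hbL w
        _ = ∑ v : W, ∑ x : W, φ (bL w v * σd v⁻¹ (aL v x)) * δ x := by
            refine Finset.sum_congr rfl fun v _ => ?_
            rw [haL v, Finset.mul_sum]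
            exact Finset.sum_congr rfl fun x _ => hterm _ _ _ _
        _ = ∑ x : W, φ (∑ v : W, bL w v * σd v⁻¹ (aL v x)) * δ x := by
            rw [Finset.sum_comm]
            refine Finset.sum_congr rfl fun x _ => ?_
            rw [map_sum, Finset.sum_mul]
    set g : W → Q := fun x => (if x = w then (1 : Q) else 0) - ∑ v : W, bL w v * σd v⁻¹ (aL v x)
      with hg
    have hzero : (∑ p : W × W, φ (if p.1 = 1 then g p.2 else 0) * δd p.1 * δ p.2) = 0 := by
      rw [Fintype.sum_prod_type]
      have hrow : ∀ a : W, (∑ b : W, φ (if a = 1 then g b else 0) * δd a * δ b)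
          = if a = 1 then (∑ b : W, φ (g b) * δ b) else 0 := by
        intro a
        split_ifs with h
        · subst h; simp [map_one δd]
        · simp
      rw [Finset.sum_congr rfl fun a _ => hrow a, Finset.sum_ite_eq' Finset.univ 1]
      simp only [Finset.mem_univ, if_true]
      have h1 : (∑ b : W, φ (if b = w then (1 : Q) else 0) * δ b) = δ w := by
        have : ∀ b : W, φ (if b = w then (1 : Q) else 0) * δ b
            = if b = w then δ w else 0 := by
          intro b; split_ifs with h
          · subst h; simp
          · simp
        rw [Finset.sum_congr rfl fun b _ => this b, Finset.sum_ite_eq' Finset.univ w]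
        simp
      simp only [hg, map_sub, sub_mul, Finset.sum_sub_distrib, h1, ← expand, sub_self]
    have hcf := hfree _ hzero (1, u)
    simp only [if_true] at hcf
    have : g u = 0 := by simpa using hcf
    have := sub_eq_zero.mp this
    rw [← this]
  -- the two matrices over Q
  have hBA : (Matrix.of fun w v => bL w v) * (Matrix.of fun v u => σd v⁻¹ (aL v u))
      = (1 : Matrix W W Q) := by
    ext w u
    rw [Matrix.mul_apply]
    simp only [Matrix.of_apply, Matrix.one_apply]
    rw [key2 w u]
    by_cases h : w = u
    · simp [h]
    · simp [h, Ne.symm h]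
  have hAB := mul_eq_one_comm.mp hBA
  constructor
  · have h1 : (∑ v : W, σd w⁻¹ (aL w v) * bL v u) = (if w = u then 1 else 0) := by
      have := congrArg (fun M : Matrix W W Q => M w u) hAB
      simpa [Matrix.mul_apply, Matrix.one_apply] using this
    calc (∑ v : W, aL w v * σd w (bL v u))
        = σd w (∑ v : W, σd w⁻¹ (aL w v) * bL v u) := by
          rw [map_sum]
          refine Finset.sum_congr rfl fun v _ => ?_
          rw [map_mul, hinv w (aL w v)]
      _ = (if w = u then 1 else 0) := by
          rw [h1]; split_ifs <;> simp
  · rw [key2 w u]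
    by_cases h : w = u
    · simp [h]
    · simp [h, Ne.symm h]
end

section
/- The set {T_w^λ : w ∈ W} is a basis of Q_{W^dyn×W} as a free left Q_{W^dyn}-module (where Q_{W^dyn×W} is viewed as a left Q_{W^dyn}-module via left multiplication). -/
/-! Statements from "Poincaré duality of elliptic classes of Schubert varieties"
(Kostant–Kumar method), formalized over an abstract twisted group algebra. -/

open scoped BigOperators
open scoped Classical

/-- The multiplicative group structure on `AddAut A` (composition), as in the older Mathlib,
which has since made `AddAut A` an additive group. -/
instance AddAut.groupOfComp {A : Type*} [Add A] : Group (AddAut A) where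
  mul g h := AddEquiv.trans h g
  one := AddEquiv.refl _
  inv := AddEquiv.symm
  mul_assoc _ _ _ := rfl
  one_mul _ := rfl
  mul_one _ := rfl
  inv_mul_cancel := AddEquiv.self_trans_symm

/-- `{T_w^λ : w ∈ W}` is a basis of `Q_{W^dyn×W}` as a free left
`Q_{W^dyn}`-module. -/
theorem T_basis
    -- the Weyl group `W`, generated by the simple reflections `s i`
    {n : ℕ} {W : Type*} [Group W] [Fintype W] [DecidableEq W]
    (s : Fin n → W) (hgen : Subgroup.closure (Set.range s) = ⊤)
    (hs2 : ∀ i : Fin n, s i * s i = 1)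
    -- the root lattice `L = ℤΦ` and coroot lattice `Lc = ℤΦ∨` with their `W`-actions,
    -- the roots `Φ`, positive roots `Φpos`, simple roots `αr i`, and the coroot map `cor`
    {L Lc : Type*} [AddCommGroup L] [AddCommGroup Lc] [DecidableEq L]
    (ρ : W →* AddAut L) (ρc : W →* AddAut Lc)
    (Φ Φpos : Finset L)
    (hΦ : (Φ : Set L) = (Φpos : Set L) ∪ (-(Φpos : Set L)))
    (αr : Fin n → L) (hαr : ∀ i, αr i ∈ Φpos)
    (cor : L → Lc)
    (hραr : ∀ i, ρ (s i) (αr i) = -(αr i))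
    (hperm : ∀ i : Fin n, ∀ β ∈ Φpos, β ≠ αr i → ρ (s i) β ∈ Φpos)
    (hΦinv : ∀ w : W, ∀ β ∈ Φ, ρ w β ∈ Φ)
    (hcorW : ∀ w : W, ∀ β ∈ Φ, cor (ρ w β) = ρc w (cor β))
    (hcorneg : ∀ β ∈ Φ, cor (-β) = -(cor β))
    -- the field `Q` with two commuting `W`-actions: the ordinary action `σ`
    -- and the dynamical action `σd`
    {Q : Type*} [Field Q]
    (σ σd : W →* (Q ≃+* Q))
    (hσcomm : ∀ (w v : W) (a : Q), σ w (σd v a) = σd v (σ w a))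
    -- the theta data: `A μ = θ(z_μ)`, `Ah μ = θ(ℏ-z_μ)`, `B ν = θ(λ_ν)`, `Bh ν = θ(ℏ-λ_ν)`,
    -- `C μ ν = θ(z_μ+λ_ν)`, `c = θ(ℏ)`
    (A Ah : L → Q) (B Bh : Lc → Q) (C : L → Lc → Q) (c : Q)
    (hA : ∀ (w : W) (μ : L), σ w (A μ) = A (ρ w μ))
    (hAh : ∀ (w : W) (μ : L), σ w (Ah μ) = Ah (ρ w μ))
    (hB : ∀ (w : W) (ν : Lc), σ w (B ν) = B ν)
    (hBh : ∀ (w : W) (ν : Lc), σ w (Bh ν) = Bh ν)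
    (hC : ∀ (w : W) (μ : L) (ν : Lc), σ w (C μ ν) = C (ρ w μ) ν)
    (hdA : ∀ (w : W) (μ : L), σd w (A μ) = A μ)
    (hdAh : ∀ (w : W) (μ : L), σd w (Ah μ) = Ah μ)
    (hdB : ∀ (w : W) (ν : Lc), σd w (B ν) = B (ρc w ν))
    (hdBh : ∀ (w : W) (ν : Lc), σd w (Bh ν) = Bh (ρc w ν))
    (hdC : ∀ (w : W) (μ : L) (ν : Lc), σd w (C μ ν) = C μ (ρc w ν))
    (hcσ : ∀ w : W, σ w c = c) (hcσd : ∀ w : W, σd w c = c)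
    (hAneg : ∀ μ : L, A (-μ) = -(A μ)) (hBneg : ∀ ν : Lc, B (-ν) = -(B ν))
    (hA0 : ∀ β ∈ Φ, A β ≠ 0) (hAh0 : ∀ β ∈ Φ, Ah β ≠ 0) (hAh0n : ∀ β ∈ Φ, Ah (-β) ≠ 0)
    (hB0 : ∀ β ∈ Φ, B (cor β) ≠ 0) (hBh0 : ∀ β ∈ Φ, Bh (cor β) ≠ 0)
    (hBh0n : ∀ β ∈ Φ, Bh (-(cor β)) ≠ 0)
    -- the twisted group algebra `R = Q_{W^dyn×W}`, free left `Q`-module with basis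
    -- `{δd w * δ v}` and twisted product; `φ : Q → R` is the inclusion
    {R : Type*} [Ring R]
    (φ : Q →+* R) (δd δ : W →* R)
    (hδcomm : ∀ w v : W, δ v * δd w = δd w * δ v)
    (hδφ : ∀ (v : W) (a : Q), δ v * φ a = φ (σ v a) * δ v)
    (hδdφ : ∀ (w : W) (a : Q), δd w * φ a = φ (σd w a) * δd w)
    (hspan : ∀ x : R, ∃ cf : W × W → Q, x = ∑ p : W × W, φ (cf p) * δd p.1 * δ p.2)
    (hfree : ∀ cf : W × W → Q,
      (∑ p : W × W, φ (cf p) * δd p.1 * δ p.2) = 0 → ∀ p : W × W, cf p = 0)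
    -- the elliptic Demazure–Lusztig operators `Tl w = T_w^λ`, `Tml w = T_w^{-λ}`
    -- (the braid relations and `(T_i)² = 1` amount to `T_u T_v = T_(uv)` for all `u,v`)
    (Tl Tml : W → R)
    (hTl1 : Tl 1 = 1) (hTml1 : Tml 1 = 1)
    (hTlmul : ∀ u v : W, Tl u * Tl v = Tl (u * v))
    (hTmlmul : ∀ u v : W, Tml u * Tml v = Tml (u * v))
    (hTls : ∀ i : Fin n, Tl (s i) =
      φ (Ah (αr i) * B (cor (αr i)) / (A (αr i) * Bh (cor (αr i)))) * (δ (s i) * δd (s i)) +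
        φ (c * C (αr i) (-(cor (αr i))) / (A (αr i) * Bh (cor (αr i)))) * δd (s i))
    (hTmls : ∀ i : Fin n, Tml (s i) =
      -(φ (Ah (αr i) * B (cor (αr i)) / (A (αr i) * Bh (-(cor (αr i))))) * (δ (s i) * δd (s i))) +
        φ (c * C (αr i) (cor (αr i)) / (A (αr i) * Bh (-(cor (αr i))))) * δd (s i))
    -- the subring `Qd = Q_{W^dyn}` of `R`, spanned by `{φ a * δd w}`
    (Qd : Subring R)
    (hQd : (Qd : Set R) = {x : R | ∃ cf : W → Q, x = ∑ w : W, φ (cf w) * δd w})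
 :
    ∃ bT : Module.Basis W (↥Qd) R, ∀ w : W, bT w = Tl w := by

  classical
  -- basic facts about the simple reflections
  have hsinv : ∀ i : Fin n, (s i)⁻¹ = s i := fun i => inv_eq_of_mul_eq_one_right (hs2 i)
  -- every element of W is a word in the s i
  have hword : ∀ v : W, ∃ l : List (Fin n), wordProd s l = v := by
    intro v
    have hv : v ∈ Subgroup.closure (Set.range s) := by rw [hgen]; trivial
    induction hv using Subgroup.closure_induction with
    | mem x hx =>
      obtain ⟨i, rfl⟩ := hx
      exact ⟨[i], by simp [wordProd]⟩
    | one => exact ⟨[], by simp [wordProd]⟩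
    | mul x y _ _ hx hy =>
      obtain ⟨lx, hlx⟩ := hx; obtain ⟨ly, hly⟩ := hy
      exact ⟨lx ++ ly, by simp [wordProd, ← hlx, ← hly]⟩
    | inv x _ hx =>
      obtain ⟨l, hl⟩ := hx
      refine ⟨l.reverse, ?_⟩
      subst hl
      show (l.reverse.map s).prod = (wordProd s l)⁻¹
      have hmap : (l.map s).map (fun x => x⁻¹) = l.map s := by
        simp only [List.map_map]
        exact List.map_congr_left (fun i _ => by simp [Function.comp, hsinv i])
      rw [wordProd, List.prod_inv_reverse, hmap, List.map_reverse]
  -- minimal words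
  have hminword : ∀ v : W, ∃ l : List (Fin n), wordProd s l = v ∧
      ∀ l' : List (Fin n), wordProd s l' = v → l.length ≤ l'.length := by
    intro v
    obtain ⟨l0, hl0⟩ := hword v
    have hex : ∃ k, ∃ l : List (Fin n), l.length = k ∧ wordProd s l = v :=
      ⟨l0.length, l0, rfl, hl0⟩
    obtain ⟨l, hlen, hlp⟩ := Nat.find_spec hex
    refine ⟨l, hlp, fun l' hl' => ?_⟩
    rw [hlen]
    exact Nat.find_le ⟨l', rfl, hl'⟩
  -- membership lemmas for Qd
  have hQdrep : ∀ x : R, x ∈ Qd → ∃ cf : W → Q, x = ∑ w : W, φ (cf w) * δd w := by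
    intro x hx
    have hx' : x ∈ (Qd : Set R) := hx
    rwa [hQd] at hx'
  have hmemQd : ∀ (a : Q) (u : W), φ a * δd u ∈ Qd := by
    intro a u
    have : φ a * δd u ∈ (Qd : Set R) := by
      rw [hQd]
      refine ⟨fun w => if w = u then a else 0, ?_⟩
      simp [apply_ite φ, ite_mul]
    exact this
  -- conjugation by δ v preserves Qd
  have hmove : ∀ (v : W) (a : Q) (u : W), δ v * (φ a * δd u) * δ v⁻¹ = φ (σ v a) * δd u := by
    intro v a u
    have h1 : δ v * (φ a * δd u) = φ (σ v a) * δd u * δ v := by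
      rw [← mul_assoc, hδφ, mul_assoc, hδcomm, ← mul_assoc]
    rw [h1, mul_assoc, ← map_mul δ]
    simp
  have hconjmem : ∀ (v : W) (z : R), z ∈ Qd → δ v * z * δ v⁻¹ ∈ Qd := by
    intro v z hz
    obtain ⟨cf, rfl⟩ := hQdrep z hz
    have hrw : δ v * (∑ u : W, φ (cf u) * δd u) * δ v⁻¹ = ∑ u : W, φ (σ v (cf u)) * δd u := by
      rw [Finset.mul_sum, Finset.sum_mul]
      exact Finset.sum_congr rfl fun u _ => hmove v (cf u) u
    rw [hrw]
    exact Subring.sum_mem _ fun u _ => hmemQd _ _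
  -- the key expansion lemma
  have key : ∀ l : List (Fin n), ∃ (uu rr : R) (q : W → R),
      uu ∈ Qd ∧ rr ∈ Qd ∧ uu * rr = 1 ∧ rr * uu = 1 ∧ (∀ v, q v ∈ Qd) ∧
      (l.map (fun i => Tl (s i))).prod = uu * δ (wordProd s l) + ∑ v : W, q v * δ v ∧
      (∀ v, q v ≠ 0 → ∃ l' : List (Fin n), l'.Sublist l ∧ l'.length < l.length ∧
        wordProd s l' = v) := by
    intro l
    induction l with
    | nil =>
      refine ⟨1, 1, fun _ => 0, one_mem _, one_mem _, one_mul 1, one_mul 1,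
        fun v => zero_mem _, ?_, ?_⟩
      · simp [wordProd]
      · intro v hv; exact absurd rfl hv
    | cons i t ih =>
      obtain ⟨uu, rr, q, huu, hrr, hur, hru, hq, heq, hsupp⟩ := ih
      have hαΦ : αr i ∈ Φ := by
        have h2 : (αr i : L) ∈ (Φ : Set L) := by
          rw [hΦ]; exact Set.mem_union_left _ (hαr i)
        exact_mod_cast h2
      have hxa0' : Ah (αr i) * B (cor (αr i)) / (A (αr i) * Bh (cor (αr i))) ≠ 0 :=
        div_ne_zero (mul_ne_zero (hAh0 _ hαΦ) (hB0 _ hαΦ))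
          (mul_ne_zero (hA0 _ hαΦ) (hBh0 _ hαΦ))
      obtain ⟨xa, xb, hxa0, hTli⟩ : ∃ xa xb : Q, xa ≠ 0 ∧
          Tl (s i) = φ xa * δd (s i) * δ (s i) + φ xb * δd (s i) := by
        refine ⟨_, c * C (αr i) (-(cor (αr i))) / (A (αr i) * Bh (cor (αr i))), hxa0', ?_⟩
        rw [hTls i, hδcomm, ← mul_assoc]
      set cv : R → R := fun z => δ (s i) * z * δ (s i)⁻¹ with hcvdef
      have hss : ∀ v : W, s i * (s i * v) = v := fun v => by rw [← mul_assoc, hs2 i, one_mul]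
      have hδsinv : δ (s i) * δ (s i)⁻¹ = 1 := by rw [← map_mul]; simp
      have hcanc : ∀ X : R, δ (s i)⁻¹ * (δ (s i) * X) = X := by
        intro X
        rw [← mul_assoc, ← map_mul δ]
        simp
      have hcvδ : ∀ z : R, δ (s i) * z = cv z * δ (s i) := by
        intro z
        show δ (s i) * z = (δ (s i) * z * δ (s i)⁻¹) * δ (s i)
        rw [mul_assoc, ← map_mul δ]
        simp
      have hcvmem : ∀ z : R, z ∈ Qd → cv z ∈ Qd := fun z hz => hconjmem (s i) z hz
      have hcvmul : ∀ z z' : R, cv z * cv z' = cv (z * z') := by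
        intro z z'
        show (δ (s i) * z * δ (s i)⁻¹) * (δ (s i) * z' * δ (s i)⁻¹)
          = δ (s i) * (z * z') * δ (s i)⁻¹
        simp only [mul_assoc, hcanc]
      have hcv0 : cv 0 = 0 := by
        show δ (s i) * 0 * δ (s i)⁻¹ = 0
        simp
      have hcv1 : cv 1 = 1 := by
        show δ (s i) * 1 * δ (s i)⁻¹ = 1
        rw [mul_one, hδsinv]
      have hδdδd : δd (s i) * δd (s i) = 1 := by rw [← map_mul, hs2 i, map_one]
      have haira : (φ xa * δd (s i)) * (δd (s i) * φ xa⁻¹) = 1 := by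
        rw [mul_assoc, ← mul_assoc (δd (s i)), hδdδd, one_mul, ← map_mul,
          mul_inv_cancel₀ hxa0, map_one]
      have hraia : (δd (s i) * φ xa⁻¹) * (φ xa * δd (s i)) = 1 := by
        rw [mul_assoc, ← mul_assoc (φ xa⁻¹), ← map_mul, inv_mul_cancel₀ hxa0, map_one,
          one_mul, hδdδd]
      have hraimem : δd (s i) * φ xa⁻¹ ∈ Qd := by rw [hδdφ]; exact hmemQd _ _
      have hterm : ∀ (z : R) (v' : W), (φ xa * δd (s i)) * δ (s i) * (z * δ v')
          = ((φ xa * δd (s i)) * cv z) * δ (s i * v') := by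
        intro z v'
        rw [map_mul]
        simp only [mul_assoc]
        rw [← mul_assoc (δ (s i)) z, hcvδ z, mul_assoc]
      have hwp : wordProd s (i :: t) = s i * wordProd s t := by simp [wordProd]
      have hAC : (φ xa * δd (s i)) * δ (s i) * (uu * δ (wordProd s t))
          = ((φ xa * δd (s i)) * cv uu) * δ (wordProd s (i :: t)) := by
        rw [hwp]; exact hterm uu _
      have hAD : (φ xa * δd (s i)) * δ (s i) * (∑ v : W, q v * δ v)
          = ∑ v : W, ((φ xa * δd (s i)) * cv (q (s i * v))) * δ v := by
        rw [Finset.mul_sum]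
        refine Fintype.sum_equiv (Equiv.mulLeft (s i)) _ _ ?_
        intro v
        simp only [Equiv.coe_mulLeft]
        rw [hterm (q v) v, hss v]
      have hBC : (φ xb * δd (s i)) * (uu * δ (wordProd s t))
          = ∑ v : W, (if v = wordProd s t then (φ xb * δd (s i)) * uu else 0) * δ v := by
        symm
        simp only [ite_mul, zero_mul, Finset.sum_ite_eq', Finset.mem_univ, if_true]
        rw [mul_assoc]
      have hBD : (φ xb * δd (s i)) * (∑ v : W, q v * δ v)
          = ∑ v : W, ((φ xb * δd (s i)) * q v) * δ v := by
        rw [Finset.mul_sum]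
        exact Finset.sum_congr rfl fun v _ => (mul_assoc _ _ _).symm
      refine ⟨(φ xa * δd (s i)) * cv uu, cv rr * (δd (s i) * φ xa⁻¹),
        fun v => (φ xa * δd (s i)) * cv (q (s i * v)) + (φ xb * δd (s i)) * q v
          + (if v = wordProd s t then (φ xb * δd (s i)) * uu else 0),
        mul_mem (hmemQd _ _) (hcvmem _ huu), mul_mem (hcvmem _ hrr) hraimem, ?_, ?_, ?_, ?_, ?_⟩
      · rw [mul_assoc, ← mul_assoc (cv uu), hcvmul, hur, hcv1, one_mul, haira]
      · rw [mul_assoc, ← mul_assoc (δd (s i) * φ xa⁻¹), hraia, one_mul, hcvmul, hru, hcv1]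
      · intro v
        refine add_mem (add_mem (mul_mem (hmemQd _ _) (hcvmem _ (hq _)))
          (mul_mem (hmemQd _ _) (hq v))) ?_
        by_cases h : v = wordProd s t
        · rw [if_pos h]; exact mul_mem (hmemQd _ _) huu
        · rw [if_neg h]; exact zero_mem _
      · rw [List.map_cons, List.prod_cons, hTli, heq, add_mul, mul_add, mul_add,
          hAC, hAD, hBC, hBD]
        simp only [add_mul, Finset.sum_add_distrib]
        abel
      · intro v hv
        by_cases h3 : v = wordProd s t
        · refine ⟨t, ?_, ?_, h3.symm⟩
          · exact List.sublist_cons_self i t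
          · simp
        · by_cases h1 : q (s i * v) = 0
          · by_cases h2 : q v = 0
            · refine absurd ?_ hv
              show (φ xa * δd (s i)) * cv (q (s i * v)) + (φ xb * δd (s i)) * q v
                + (if v = wordProd s t then (φ xb * δd (s i)) * uu else 0) = 0
              rw [h1, h2, if_neg h3, hcv0, mul_zero, mul_zero]
              simp
            · obtain ⟨l', hsub, hlen, hwp'⟩ := hsupp v h2
              refine ⟨l', hsub.cons i, ?_, hwp'⟩
              simp only [List.length_cons]; omega
          · obtain ⟨l', hsub, hlen, hwp'⟩ := hsupp _ h1
            refine ⟨i :: l', hsub.cons₂ i, ?_, ?_⟩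
            · simp only [List.length_cons]; omega
            · have h4 : wordProd s (i :: l') = s i * wordProd s l' := by simp [wordProd]
              rw [h4, hwp', hss v]
  -- Tl of a word is a product of Tl of simple reflections
  have hTlword : ∀ l : List (Fin n), Tl (wordProd s l) = (l.map (fun i => Tl (s i))).prod := by
    intro l
    induction l with
    | nil => simpa [wordProd] using hTl1
    | cons i t ih =>
      have h : wordProd s (i :: t) = s i * wordProd s t := by simp [wordProd]
      rw [h, ← hTlmul, ih, List.map_cons, List.prod_cons]
  -- independence of the δ v over Qd
  have hδind : ∀ g : W → R, (∀ v, g v ∈ Qd) → (∑ v : W, g v * δ v) = 0 → ∀ v, g v = 0 := by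
    intro g hgmem hsum
    choose cf hcf using fun v => hQdrep (g v) (hgmem v)
    have h2 : (∑ p : W × W, φ (cf p.2 p.1) * δd p.1 * δ p.2) = 0 := by
      calc ∑ p : W × W, φ (cf p.2 p.1) * δd p.1 * δ p.2
          = ∑ u : W, ∑ v : W, φ (cf v u) * δd u * δ v :=
            Fintype.sum_prod_type (fun p : W × W => φ (cf p.2 p.1) * δd p.1 * δ p.2)
        _ = ∑ v : W, ∑ u : W, φ (cf v u) * δd u * δ v := Finset.sum_comm
        _ = ∑ v : W, g v * δ v := Finset.sum_congr rfl fun v _ => by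
            rw [hcf v, Finset.sum_mul]
        _ = 0 := hsum
    intro v
    have h3 := hfree _ h2
    rw [hcf v]
    refine Finset.sum_eq_zero fun u _ => ?_
    rw [show cf v u = 0 from h3 (u, v), map_zero, zero_mul]
  -- expansion of Tl v with respect to a chosen minimal word
  choose lw hlw hlmin using hminword
  choose uu rr qq huu hrr hur hru hq hKeq hKsupp using fun v : W => key (lw v)
  have hTlexp : ∀ v : W, Tl v = uu v * δ v + ∑ v' : W, qq v v' * δ v' := by
    intro v
    have h0 := hTlword (lw v)
    rw [hlw v] at h0
    have h1 := hKeq v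
    rw [hlw v] at h1
    rw [h0, h1]
  -- linear independence
  have hLI : LinearIndependent (↥Qd) Tl := by
    rw [Fintype.linearIndependent_iff]
    intro g hg
    by_contra hcon
    push_neg at hcon
    obtain ⟨w1, hw1⟩ := hcon
    have hg' : ∑ v : W, (g v : R) * Tl v = 0 := hg
    set S : Finset W := Finset.univ.filter (fun v => g v ≠ 0) with hS
    have hSne : S.Nonempty := ⟨w1, by simp [hS, hw1]⟩
    obtain ⟨v₀, hv₀S, hv₀max⟩ := S.exists_max_image (fun v => (lw v).length) hSne
    have hv₀ne : g v₀ ≠ 0 := by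
      have := hv₀S
      simp only [hS, Finset.mem_filter] at this
      exact this.2
    have hGsum : ∑ v' : W, ((g v' : R) * uu v' + ∑ v : W, (g v : R) * qq v v') * δ v' = 0 := by
      calc ∑ v' : W, ((g v' : R) * uu v' + ∑ v : W, (g v : R) * qq v v') * δ v'
          = ∑ v' : W, ((g v' : R) * uu v') * δ v'
            + ∑ v' : W, (∑ v : W, (g v : R) * qq v v') * δ v' := by
            simp only [add_mul, Finset.sum_add_distrib]
        _ = ∑ v' : W, ((g v' : R) * uu v') * δ v'
            + ∑ v' : W, ∑ v : W, ((g v : R) * qq v v') * δ v' := by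
            simp only [Finset.sum_mul]
        _ = ∑ v : W, ((g v : R) * uu v) * δ v
            + ∑ v : W, ∑ v' : W, ((g v : R) * qq v v') * δ v' := by rw [Finset.sum_comm]
        _ = ∑ v : W, (g v : R) * (uu v * δ v + ∑ v' : W, qq v v' * δ v') := by
            rw [← Finset.sum_add_distrib]
            refine Finset.sum_congr rfl fun v _ => ?_
            rw [mul_add, mul_assoc, Finset.mul_sum]
            simp only [mul_assoc]
        _ = ∑ v : W, (g v : R) * Tl v := by
            refine Finset.sum_congr rfl fun v _ => ?_
            rw [hTlexp v]
        _ = 0 := hg'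
    have hGmem : ∀ v' : W, (g v' : R) * uu v' + ∑ v : W, (g v : R) * qq v v' ∈ Qd :=
      fun v' => add_mem (mul_mem (SetLike.coe_mem _) (huu v'))
        (Subring.sum_mem _ fun v _ => mul_mem (SetLike.coe_mem _) (hq v v'))
    have hG0 := hδind _ hGmem hGsum v₀
    have hzero : ∑ v : W, (g v : R) * qq v v₀ = 0 := by
      refine Finset.sum_eq_zero fun v _ => ?_
      by_cases hgv : g v = 0
      · rw [hgv]; simp
      · have hvS : v ∈ S := by simp [hS, hgv]
        have hle : (lw v).length ≤ (lw v₀).length := hv₀max v hvS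
        have hqz : qq v v₀ = 0 := by
          by_contra hne
          obtain ⟨l', _, hlen, hwp'⟩ := hKsupp v v₀ hne
          have := hlmin v₀ l' hwp'
          omega
        rw [hqz, mul_zero]
    rw [hzero, add_zero] at hG0
    have hcoe : (g v₀ : R) = 0 := by
      calc (g v₀ : R) = (g v₀ : R) * (uu v₀ * rr v₀) := by rw [hur v₀, mul_one]
        _ = ((g v₀ : R) * uu v₀) * rr v₀ := by rw [mul_assoc]
        _ = 0 := by rw [hG0, zero_mul]
    exact hv₀ne (by exact_mod_cast hcoe)
  -- spanning
  have hdeltaM : ∀ (k : ℕ) (l : List (Fin n)), l.length ≤ k →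
      δ (wordProd s l) ∈ Submodule.span (↥Qd) (Set.range Tl) := by
    intro k
    induction k with
    | zero =>
      intro l hl
      have hnil : l = [] := List.length_eq_zero_iff.mp (Nat.le_zero.mp hl)
      subst hnil
      have h1 : wordProd s ([] : List (Fin n)) = 1 := rfl
      rw [h1, map_one]
      rw [← hTl1]
      exact Submodule.subset_span ⟨1, rfl⟩
    | succ k ihk =>
      intro l hl
      obtain ⟨uuL, rrL, qL, huuL, hrrL, hurL, hruL, hqL, heqL, hsuppL⟩ := key l
      have hδeq : δ (wordProd s l) = rrL * Tl (wordProd s l) - ∑ v : W, (rrL * qL v) * δ v := by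
        rw [hTlword, heqL, mul_add, ← mul_assoc, hruL, one_mul, Finset.mul_sum]
        have : ∑ v : W, rrL * (qL v * δ v) = ∑ v : W, (rrL * qL v) * δ v :=
          Finset.sum_congr rfl fun v _ => (mul_assoc _ _ _).symm
        rw [this, add_sub_cancel_right]
      rw [hδeq]
      refine Submodule.sub_mem _ ?_ ?_
      · have : rrL * Tl (wordProd s l)
            = (⟨rrL, hrrL⟩ : ↥Qd) • Tl (wordProd s l) := rfl
        rw [this]
        exact Submodule.smul_mem _ _ (Submodule.subset_span ⟨_, rfl⟩)
      · refine Submodule.sum_mem _ fun v _ => ?_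
        by_cases h0 : qL v = 0
        · rw [h0, mul_zero, zero_mul]; exact Submodule.zero_mem _
        · obtain ⟨l', _, hlen, hwp'⟩ := hsuppL v h0
          have hδv : δ v ∈ Submodule.span (↥Qd) (Set.range Tl) := by
            rw [← hwp']
            exact ihk l' (by omega)
          have : (rrL * qL v) * δ v = (⟨rrL * qL v, mul_mem hrrL (hqL v)⟩ : ↥Qd) • δ v := rfl
          rw [this]
          exact Submodule.smul_mem _ _ hδv
  have hSP : ⊤ ≤ Submodule.span (↥Qd) (Set.range Tl) := by
    intro x _
    obtain ⟨cf, hcf⟩ := hspan x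
    rw [hcf]
    refine Submodule.sum_mem _ fun p _ => ?_
    obtain ⟨l, hl⟩ := hword p.2
    have hδv : δ p.2 ∈ Submodule.span (↥Qd) (Set.range Tl) := by
      rw [← hl]
      exact hdeltaM l.length l le_rfl
    have : φ (cf p) * δd p.1 * δ p.2 = (⟨φ (cf p) * δd p.1, hmemQd _ _⟩ : ↥Qd) • δ p.2 := rfl
    rw [this]
    exact Submodule.smul_mem _ _ hδv
  exact ⟨Module.Basis.mk hLI hSP, fun w => Module.Basis.mk_apply hLI hSP w⟩
end

section
/- Adjointness of the anti-involution under the Poincaré pairing: for all f, f' ∈ Q_W^* and all x ∈ Q_{W^dyn×W}, Y_Π • ((x • f) · f') = Y_Π • (f · (ι(x) • f')). -/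
/-! Statements from "Poincaré duality of elliptic classes of Schubert varieties"
(Kostant–Kumar method), formalized over an abstract twisted group algebra. -/

open scoped BigOperators
open scoped Classical

/-- adjointness of the anti-involution under the Poincaré pairing:
`Y_Π • ((x • f) · f') = Y_Π • (f · (ι(x) • f'))`. -/
theorem iota_adjoint
    -- the Weyl group `W`, generated by the simple reflections `s i`
    {n : ℕ} {W : Type*} [Group W] [Fintype W] [DecidableEq W]
    (s : Fin n → W) (hgen : Subgroup.closure (Set.range s) = ⊤)
    (hs2 : ∀ i : Fin n, s i * s i = 1)
    -- the root lattice `L = ℤΦ` and coroot lattice `Lc = ℤΦ∨` with their `W`-actions,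
    -- the roots `Φ`, positive roots `Φpos`, simple roots `αr i`, and the coroot map `cor`
    {L Lc : Type*} [AddCommGroup L] [AddCommGroup Lc] [DecidableEq L]
    (ρ : W →* Multiplicative (AddAut L)) (ρc : W →* Multiplicative (AddAut Lc))
    (Φ Φpos : Finset L)
    (hΦ : (Φ : Set L) = (Φpos : Set L) ∪ (-(Φpos : Set L)))
    (αr : Fin n → L) (hαr : ∀ i, αr i ∈ Φpos)
    (cor : L → Lc)
    (hραr : ∀ i, Multiplicative.toAdd (ρ (s i)) (αr i) = -(αr i))
    (hperm : ∀ i : Fin n, ∀ β ∈ Φpos, β ≠ αr i → Multiplicative.toAdd (ρ (s i)) β ∈ Φpos)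
    (hΦinv : ∀ w : W, ∀ β ∈ Φ, Multiplicative.toAdd (ρ w) β ∈ Φ)
    (hcorW : ∀ w : W, ∀ β ∈ Φ, cor (Multiplicative.toAdd (ρ w) β) = Multiplicative.toAdd (ρc w) (cor β))
    (hcorneg : ∀ β ∈ Φ, cor (-β) = -(cor β))
    -- the field `Q` with two commuting `W`-actions: the ordinary action `σ`
    -- and the dynamical action `σd`
    {Q : Type*} [Field Q]
    (σ σd : W →* (Q ≃+* Q))
    (hσcomm : ∀ (w v : W) (a : Q), σ w (σd v a) = σd v (σ w a))
    -- the theta data: `A μ = θ(z_μ)`, `Ah μ = θ(ℏ-z_μ)`, `B ν = θ(λ_ν)`, `Bh ν = θ(ℏ-λ_ν)`,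
    -- `C μ ν = θ(z_μ+λ_ν)`, `c = θ(ℏ)`
    (A Ah : L → Q) (B Bh : Lc → Q) (C : L → Lc → Q) (c : Q)
    (hA : ∀ (w : W) (μ : L), σ w (A μ) = A (Multiplicative.toAdd (ρ w) μ))
    (hAh : ∀ (w : W) (μ : L), σ w (Ah μ) = Ah (Multiplicative.toAdd (ρ w) μ))
    (hB : ∀ (w : W) (ν : Lc), σ w (B ν) = B ν)
    (hBh : ∀ (w : W) (ν : Lc), σ w (Bh ν) = Bh ν)
    (hC : ∀ (w : W) (μ : L) (ν : Lc), σ w (C μ ν) = C (Multiplicative.toAdd (ρ w) μ) ν)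
    (hdA : ∀ (w : W) (μ : L), σd w (A μ) = A μ)
    (hdAh : ∀ (w : W) (μ : L), σd w (Ah μ) = Ah μ)
    (hdB : ∀ (w : W) (ν : Lc), σd w (B ν) = B (Multiplicative.toAdd (ρc w) ν))
    (hdBh : ∀ (w : W) (ν : Lc), σd w (Bh ν) = Bh (Multiplicative.toAdd (ρc w) ν))
    (hdC : ∀ (w : W) (μ : L) (ν : Lc), σd w (C μ ν) = C μ (Multiplicative.toAdd (ρc w) ν))
    (hcσ : ∀ w : W, σ w c = c) (hcσd : ∀ w : W, σd w c = c)
    (hAneg : ∀ μ : L, A (-μ) = -(A μ)) (hBneg : ∀ ν : Lc, B (-ν) = -(B ν))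
    (hA0 : ∀ β ∈ Φ, A β ≠ 0) (hAh0 : ∀ β ∈ Φ, Ah β ≠ 0) (hAh0n : ∀ β ∈ Φ, Ah (-β) ≠ 0)
    (hB0 : ∀ β ∈ Φ, B (cor β) ≠ 0) (hBh0 : ∀ β ∈ Φ, Bh (cor β) ≠ 0)
    (hBh0n : ∀ β ∈ Φ, Bh (-(cor β)) ≠ 0)
    -- the twisted group algebra `R = Q_{W^dyn×W}`, free left `Q`-module with basis
    -- `{δd w * δ v}` and twisted product; `φ : Q → R` is the inclusion
    {R : Type*} [Ring R]
    (φ : Q →+* R) (δd δ : W →* R)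
    (hδcomm : ∀ w v : W, δ v * δd w = δd w * δ v)
    (hδφ : ∀ (v : W) (a : Q), δ v * φ a = φ (σ v a) * δ v)
    (hδdφ : ∀ (w : W) (a : Q), δd w * φ a = φ (σd w a) * δd w)
    (hspan : ∀ x : R, ∃ cf : W × W → Q, x = ∑ p : W × W, φ (cf p) * δd p.1 * δ p.2)
    (hfree : ∀ cf : W × W → Q,
      (∑ p : W × W, φ (cf p) * δd p.1 * δ p.2) = 0 → ∀ p : W × W, cf p = 0)
    -- the anti-involution `ι(a δd_v δ_w) = δd_{v⁻¹} δ_{w⁻¹} · a·(^w g)/g`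
    (iot : R →+ R)
    (hiot : ∀ (a : Q) (v w : W),
      iot (φ a * (δd v * δ w)) =
        δd v⁻¹ * δ w⁻¹ * φ (a * σ w (∏ β ∈ Φpos, Ah β / A β) / (∏ β ∈ Φpos, Ah β / A β)))
    -- the `•`-action of `Q_{W^dyn×W}` on `Q_W^* = Hom(W,Q)` (written in coordinates:
    -- a function `f : W → Q` stands for `Σ_u f_u · (f u)`)
    (bullet : R → (W → Q) → (W → Q))
    (hbul1 : ∀ f : W → Q, bullet 1 f = f)
    (hbulmul : ∀ (x y : R) (f : W → Q), bullet (x * y) f = bullet x (bullet y f))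
    (hbuladd : ∀ (x y : R) (f : W → Q), bullet (x + y) f = bullet x f + bullet y f)
    (hbul : ∀ (a : Q) (w v : W) (f : W → Q),
      bullet (φ a * δd w * δ v) f = fun t => σ t a * σd w (f (t * v)))
    (f f' : W → Q) (x : R) :
    bullet ((∑ u : W, δd u) * (∑ u : W, δ u * φ (∏ β ∈ Φpos, A β / Ah β))) (bullet x f * f') =
      bullet ((∑ u : W, δd u) * (∑ u : W, δ u * φ (∏ β ∈ Φpos, A β / Ah β))) (f * bullet (iot x) f') := by

  classical
  set g : Q := ∏ β ∈ Φpos, Ah β / A β with hgdef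
  set g' : Q := ∏ β ∈ Φpos, A β / Ah β with hg'def
  have hΦposΦ : ∀ β ∈ Φpos, β ∈ Φ := by
    intro β hβ
    have hb : (β : L) ∈ (Φ : Set L) := by
      rw [hΦ]; exact Or.inl hβ
    exact_mod_cast hb
  have hgg' : g * g' = 1 := by
    rw [hgdef, hg'def, ← Finset.prod_mul_distrib]
    apply Finset.prod_eq_one
    intro β hβ
    have h1 := hA0 β (hΦposΦ β hβ)
    have h2 := hAh0 β (hΦposΦ β hβ)
    field_simp
  have hσmul : ∀ (u v : W) (x : Q), σ (u * v) x = σ u (σ v x) := by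
    intro u v x; rw [map_mul]; rfl
  have hσdmul : ∀ (u v : W) (x : Q), σd (u * v) x = σd u (σd v x) := by
    intro u v x; rw [map_mul]; rfl
  have hdd : ∀ (w : W) (x : Q), σd w (σd w⁻¹ x) = x := by
    intro w x
    rw [← hσdmul, mul_inv_cancel, map_one]
    rfl
  have hdg : ∀ u : W, σd u g = g := by
    intro u; rw [hgdef, map_prod]
    exact Finset.prod_congr rfl fun β _ => by rw [map_div₀, hdAh, hdA]
  have hdg' : ∀ u : W, σd u g' = g' := by
    intro u; rw [hg'def, map_prod]
    exact Finset.prod_congr rfl fun β _ => by rw [map_div₀, hdAh, hdA]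
  have hbul0 : ∀ f : W → Q, bullet 0 f = 0 := by
    intro f
    have h := hbuladd 0 0 f
    rw [add_zero] at h
    exact (left_eq_add.mp h)
  have hbsum : ∀ (f : W → Q) (xs : W × W → R),
      bullet (∑ p : W × W, xs p) f = ∑ p : W × W, bullet (xs p) f := by
    intro f xs
    exact map_sum (AddMonoidHom.mk' (fun x => bullet x f) (fun a b => hbuladd a b f)) xs
      Finset.univ
  have hYexp : (∑ u : W, δd u) * (∑ u : W, δ u * φ g') =
      ∑ p : W × W, φ (σ p.2 g') * δd p.1 * δ p.2 := by
    rw [Finset.sum_mul_sum, Fintype.sum_prod_type]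
    apply Finset.sum_congr rfl
    intro u _
    apply Finset.sum_congr rfl
    intro v _
    rw [hδφ, ← mul_assoc, hδdφ, ← hσcomm, hdg']
  have hY : ∀ (h : W → Q) (t : W),
      bullet ((∑ u : W, δd u) * (∑ u : W, δ u * φ g')) h t =
        ∑ p : W × W, σ p.2 g' * σd p.1 (h p.2) := by
    intro h t
    rw [hYexp, hbsum, Finset.sum_apply]
    simp only [hbul]
    refine Fintype.sum_equiv (Equiv.prodCongr (Equiv.refl W) (Equiv.mulLeft t)) _ _ ?_
    intro q
    simp only [Equiv.prodCongr_apply, Equiv.coe_refl, Equiv.coe_mulLeft, Prod.map_fst, Prod.map_snd, id_eq]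
    rw [hσmul]
  obtain ⟨cf, rfl⟩ := hspan x
  funext t
  rw [hY, hY, hbsum, map_sum iot, hbsum]
  simp only [Pi.mul_apply, Finset.sum_apply, Finset.sum_mul, Finset.mul_sum, map_sum]

  conv_lhs => rw [Finset.sum_comm]
  conv_rhs => rw [Finset.sum_comm]
  refine Finset.sum_congr rfl fun p _ => ?_
  obtain ⟨w, m⟩ := p
  have hiott : iot (φ (cf (w, m)) * δd w * δ m) =
      φ (σd w⁻¹ (σ m⁻¹ (cf (w, m) * σ m g / g))) * δd w⁻¹ * δ m⁻¹ := by
    rw [mul_assoc, hiot, mul_assoc, hδφ, ← mul_assoc, hδdφ]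
  simp only [hiott, hbul]
  refine Fintype.sum_equiv (Equiv.prodCongr (Equiv.mulRight w) (Equiv.mulRight m)) _ _ ?_
  intro q
  obtain ⟨u, v⟩ := q
  simp only [Equiv.prodCongr_apply, Equiv.coe_mulRight, Prod.map_fst, Prod.map_snd]
  rw [mul_inv_cancel_right]
  have e1 : σ (v * m) (σd w⁻¹ (σ m⁻¹ (cf (w, m) * σ m g / g))) =
      σd w⁻¹ (σ v (cf (w, m) * σ m g / g)) := by
    rw [hσcomm, ← hσmul, mul_inv_cancel_right]
  rw [e1, ← map_mul (σd w⁻¹) (σ v (cf (w, m) * σ m g / g)) (f' v),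
    hσdmul u w, map_mul (σd w), hdd]
  have e2 : σ v (cf (w, m) * σ m g / g) = σ v (cf (w, m)) * σ (v * m) g / σ v g := by
    rw [map_div₀, map_mul, ← hσmul]
  rw [e2]
  simp only [map_mul (σd u), map_div₀ (σd u), ← hσcomm, hdg]
  have h1 : σ (v * m) g' * σ (v * m) g = 1 := by
    rw [← map_mul, mul_comm g' g, hgg', map_one]
  have h2 : σ v g' * σ v g = 1 := by
    rw [← map_mul, mul_comm g' g, hgg', map_one]
  have hvg : σ v g ≠ 0 := right_ne_zero_of_mul_eq_one h2
  have hvmg : σ (v * m) g ≠ 0 := right_ne_zero_of_mul_eq_one h1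
  have hvmg2 : (σ v * σ m) g ≠ 0 := by
    rw [← map_mul]; exact hvmg
  rw [eq_inv_of_mul_eq_one_left h1, eq_inv_of_mul_eq_one_left h2]
  field_simp
end
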